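/- arXiv:1911.10754 — 3 statements merged into one kernel-verified Lean document; each statement's English description precedes it below -/
import Mathlib

section
/- Let K be a field of characteristic zero and let A be an essential supersolvable line arrangement in P² over K with a modular point p satisfying μ(p) = m − 1 ≥ 1, and write |A| = m + k with k ≥ 1. If k ≤ m, then n₂(A) ≥ k(m − k + 1). -/
/-! Basic setup: the projective plane over a field `K` is modelled by linear
subspaces of `K³ = Fin 3 → K`: projective points are 1-dimensional subspaces
and projective lines are 2-dimensional subspaces; incidence is inclusion. -/

variable (K : Type*) [Field K]

/-- A point of `P²`: a 1-dimensional linear subspace of `K³`. -/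
def IsPoint (p : Submodule K (Fin 3 → K)) : Prop :=
  Module.finrank K p = 1

/-- A line of `P²`: a 2-dimensional linear subspace of `K³`. -/
def IsLine (H : Submodule K (Fin 3 → K)) : Prop :=
  Module.finrank K H = 2

/-- A line arrangement: a finite set of lines in `P²`. -/
def IsArrangement (A : Finset (Submodule K (Fin 3 → K))) : Prop :=
  ∀ H ∈ A, IsLine K H

/-- An arrangement is essential if its lines have no common point. -/
def Essential (A : Finset (Submodule K (Fin 3 → K))) : Prop :=
  ¬ ∃ p : Submodule K (Fin 3 → K), IsPoint K p ∧ ∀ H ∈ A, p ≤ H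

/-- The multiplicity of a point `p`: the number of lines of `A` passing through `p`. -/
noncomputable def mult (A : Finset (Submodule K (Fin 3 → K)))
    (p : Submodule K (Fin 3 → K)) : ℕ :=
  {H ∈ (A : Set (Submodule K (Fin 3 → K))) | p ≤ H}.ncard

/-- An intersection point of `A`: a point lying on at least two lines of `A`. -/
def IsIntersectionPoint (A : Finset (Submodule K (Fin 3 → K)))
    (p : Submodule K (Fin 3 → K)) : Prop :=
  IsPoint K p ∧ 2 ≤ mult K A p

/-- A double point of `A`: a point lying on exactly two lines of `A`. -/
def IsDoublePoint (A : Finset (Submodule K (Fin 3 → K)))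
    (p : Submodule K (Fin 3 → K)) : Prop :=
  IsPoint K p ∧ mult K A p = 2

/-- `n₂(A)`: the number of double points of `A`. -/
noncomputable def n2 (A : Finset (Submodule K (Fin 3 → K))) : ℕ :=
  {p | IsDoublePoint K A p}.ncard

/-- `n₂(H)`: the number of double points of `A` lying on the line `H`. -/
noncomputable def n2on (A : Finset (Submodule K (Fin 3 → K)))
    (H : Submodule K (Fin 3 → K)) : ℕ :=
  {p | IsDoublePoint K A p ∧ p ≤ H}.ncard

/-- `|A^H|`: the number of intersection points of `A` lying on the line `H`. -/
noncomputable def pointsOn (A : Finset (Submodule K (Fin 3 → K)))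
    (H : Submodule K (Fin 3 → K)) : ℕ :=
  {p | IsIntersectionPoint K A p ∧ p ≤ H}.ncard

/-- `p` is a modular point of `A`: an intersection point such that for all distinct
lines `H, L` of `A` not passing through `p`, the point `H ∩ L` lies on some line
of `A` through `p`. -/
def IsModular (A : Finset (Submodule K (Fin 3 → K)))
    (p : Submodule K (Fin 3 → K)) : Prop :=
  IsIntersectionPoint K A p ∧
    ∀ H ∈ A, ∀ L ∈ A, ¬ p ≤ H → ¬ p ≤ L → H ≠ L →
      ∃ K' ∈ A, p ≤ K' ∧ H ⊓ L ≤ K'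

/-- An arrangement is supersolvable if it has a modular point. -/
def Supersolvable (A : Finset (Submodule K (Fin 3 → K))) : Prop :=
  ∃ p, IsModular K A p

section AuxLemmas

variable {F : Type*} [Field F]

/-- Two distinct lines in `P²` meet in a point. -/
lemma aux_inf_finrank (H L : Submodule F (Fin 3 → F))
    (hH : Module.finrank F H = 2) (hL : Module.finrank F L = 2) (hne : H ≠ L) :
    Module.finrank F ↥(H ⊓ L) = 1 := by
  have h3 : Module.finrank F (Fin 3 → F) = 3 := by simp
  have hsum := Submodule.finrank_sup_add_finrank_inf_eq H L
  have hle : Module.finrank F ↥(H ⊔ L) ≤ 3 :=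
    le_trans (Submodule.finrank_le _) (le_of_eq h3)
  have h2 : ¬ Module.finrank F ↥(H ⊔ L) ≤ 2 := by
    intro hc
    have e1 : H = H ⊔ L := Submodule.eq_of_le_of_finrank_le le_sup_left (by omega)
    have e2 : L = H ⊔ L := Submodule.eq_of_le_of_finrank_le le_sup_right (by omega)
    exact hne (e1.trans e2.symm)
  omega

lemma aux_mult_eq (A : Finset (Submodule F (Fin 3 → F))) (q : Submodule F (Fin 3 → F))
    [DecidablePred fun H : Submodule F (Fin 3 → F) => q ≤ H] :
    mult F A q = (A.filter (fun H => q ≤ H)).card := by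
  unfold mult
  rw [show {H ∈ (A : Set (Submodule F (Fin 3 → F))) | q ≤ H}
        = ↑(A.filter (fun H => q ≤ H)) from by ext x; simp]
  exact Set.ncard_coe_finset _

end AuxLemmas

/-- **Corollary (lower bound, case `k ≤ m`).**
Let `A` be an essential supersolvable line arrangement over a field of
characteristic zero with modular point `p`, `μ(p) = m - 1 ≥ 1` (i.e. `|A_p| = m ≥ 2`),
and `|A| = m + k` with `1 ≤ k ≤ m`.  Then `n₂(A) ≥ k(m - k + 1)`. -/
theorem n2_lower_bound_of_supersolvable_k_le_m
    (K : Type*) [Field K] [CharZero K]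
    (A : Finset (Submodule K (Fin 3 → K)))
    (hA : IsArrangement K A) (hess : Essential K A)
    (p : Submodule K (Fin 3 → K)) (m k : ℕ)
    (hmod : IsModular K A p)
    (hm : mult K A p = m) (hm2 : 2 ≤ m)
    (hcard : A.card = m + k) (hk : 1 ≤ k) (hkm : k ≤ m) :
    k * (m - k + 1) ≤ n2 K A := by
  classical
  obtain ⟨⟨hp1, _⟩, _⟩ := hmod
  have hp1' : Module.finrank K p = 1 := hp1
  -- lines through p and lines not through p
  set Ap : Finset (Submodule K (Fin 3 → K)) := A.filter (fun H => p ≤ H) with hApdef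
  set B : Finset (Submodule K (Fin 3 → K)) := A.filter (fun H => ¬ p ≤ H) with hBdef
  have hApcard : Ap.card = m := by rw [← hm, aux_mult_eq]
  have hBcard : B.card = k := by
    have hBA : B = A \ Ap := by
      ext x
      simp only [hBdef, hApdef, Finset.mem_filter, Finset.mem_sdiff]
      tauto
    rw [hBA, Finset.card_sdiff_of_subset (Finset.filter_subset _ _), hApcard, hcard]
    omega
  -- distinct lines of A meet in points
  have hinf1 : ∀ H ∈ A, ∀ L ∈ A, H ≠ L → Module.finrank K ↥(H ⊓ L) = 1 := by
    intro H hH L hL hne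
    exact aux_inf_finrank H L (hA H hH) (hA L hL) hne
  -- two distinct lines through p meet exactly at p
  have hpp : ∀ W ∈ Ap, ∀ W' ∈ Ap, W ≠ W' → W ⊓ W' = p := by
    intro W hW W' hW' hne
    obtain ⟨hWA, hWp⟩ := Finset.mem_filter.1 hW
    obtain ⟨hW'A, hW'p⟩ := Finset.mem_filter.1 hW'
    have h1 := hinf1 W hWA W' hW'A hne
    exact (Submodule.eq_of_le_of_finrank_le (le_inf hWp hW'p) (by omega)).symm
  -- a line of B and a line of Ap are distinct
  have hLW : ∀ L ∈ B, ∀ W ∈ Ap, L ≠ W := by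
    intro L hL W hW h
    exact (Finset.mem_filter.1 hL).2 (h ▸ (Finset.mem_filter.1 hW).2)
  have hq1 : ∀ L ∈ B, ∀ W ∈ Ap, Module.finrank K ↥(L ⊓ W) = 1 := by
    intro L hL W hW
    exact hinf1 L (Finset.mem_filter.1 hL).1 W (Finset.mem_filter.1 hW).1 (hLW L hL W hW)
  -- W ↦ L ⊓ W is injective on Ap when L ∈ B
  have hinj : ∀ L ∈ B, ∀ W ∈ Ap, ∀ W' ∈ Ap, L ⊓ W = L ⊓ W' → W = W' := by
    intro L hL W hW W' hW' he
    by_contra hne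
    have h1 : L ⊓ W ≤ W ⊓ W' := le_inf inf_le_right (he ▸ inf_le_right)
    rw [hpp W hW W' hW' hne] at h1
    have h2 : L ⊓ W = p := Submodule.eq_of_le_of_finrank_le h1
      (by rw [hp1', hq1 L hL W hW])
    exact (Finset.mem_filter.1 hL).2 (h2 ▸ inf_le_left)
  -- lines W through p such that L ⊓ W is a double point
  set good : Submodule K (Fin 3 → K) → Finset (Submodule K (Fin 3 → K)) :=
    fun L => Ap.filter (fun W => IsDoublePoint K A (L ⊓ W)) with hgooddef
  have hgoodsub : ∀ L, good L ⊆ Ap := fun L => Finset.filter_subset _ _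
  -- each bad W gives a line of B \ {L} through L ⊓ W
  have key : ∀ L ∈ B, ∀ W ∈ Ap \ good L, ∃ H, H ∈ B.erase L ∧ L ⊓ W ≤ H := by
    intro L hL W hW
    have hLA : L ∈ A := (Finset.mem_filter.1 hL).1
    have hLp : ¬ p ≤ L := (Finset.mem_filter.1 hL).2
    obtain ⟨hWAp, hWng⟩ := Finset.mem_sdiff.1 hW
    obtain ⟨hWA, hWp⟩ := Finset.mem_filter.1 hWAp
    set q := L ⊓ W with hqdef
    have hqpt : Module.finrank K ↥q = 1 := hq1 L hL W hWAp
    have hnd : ¬ IsDoublePoint K A q := by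
      intro hc; exact hWng (Finset.mem_filter.2 ⟨hWAp, hc⟩)
    have hsub : {L, W} ⊆ A.filter (fun H => q ≤ H) := by
      intro x hx
      rcases Finset.mem_insert.1 hx with h | h
      · exact h ▸ Finset.mem_filter.2 ⟨hLA, inf_le_left⟩
      · rw [Finset.mem_singleton.1 h]
        exact Finset.mem_filter.2 ⟨hWA, inf_le_right⟩
    have hcard2 : ({L, W} : Finset (Submodule K (Fin 3 → K))).card = 2 :=
      Finset.card_pair (hLW L hL W hWAp)
    have hge : 2 ≤ (A.filter (fun H => q ≤ H)).card := by
      calc 2 = ({L, W} : Finset (Submodule K (Fin 3 → K))).card := hcard2.symm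
        _ ≤ _ := Finset.card_le_card hsub
    have hmne : (A.filter (fun H => q ≤ H)).card ≠ 2 := by
      intro hc
      exact hnd ⟨hqpt, by rw [aux_mult_eq, hc]⟩
    have hex : ∃ H ∈ A.filter (fun H => q ≤ H), H ∉ ({L, W} : Finset (Submodule K (Fin 3 → K))) := by
      by_contra hno
      push_neg at hno
      have := Finset.card_le_card hno
      omega
    obtain ⟨H, hHf, hHnot⟩ := hex
    obtain ⟨hHA, hqH⟩ := Finset.mem_filter.1 hHf
    have hHL : H ≠ L := fun h => hHnot (by simp [h])
    have hHW : H ≠ W := fun h => hHnot (by simp [h])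
    have hHp : ¬ p ≤ H := by
      intro hpH
      have hHAp : H ∈ Ap := Finset.mem_filter.2 ⟨hHA, hpH⟩
      have he := hpp H hHAp W hWAp hHW
      have hqp : q ≤ p := he ▸ le_inf hqH inf_le_right
      have : q = p := Submodule.eq_of_le_of_finrank_le hqp (by omega)
      exact hLp (this ▸ inf_le_left)
    exact ⟨H, Finset.mem_erase.2 ⟨hHL, Finset.mem_filter.2 ⟨hHA, hHp⟩⟩, hqH⟩
  -- so at most k - 1 bad lines, hence at least m - k + 1 good lines
  have hgoodcard : ∀ L ∈ B, m - k + 1 ≤ (good L).card := by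
    intro L hL
    have hLA : L ∈ A := (Finset.mem_filter.1 hL).1
    have hbadcard : (Ap \ good L).card ≤ (B.erase L).card := by
      apply Finset.card_le_card_of_injOn
        (fun W => if h : ∃ H, H ∈ B.erase L ∧ L ⊓ W ≤ H then h.choose else L)
      · intro W hW
        obtain ⟨H, hH⟩ := key L hL W hW
        beta_reduce
        rw [dif_pos (⟨H, hH⟩ : ∃ H, H ∈ B.erase L ∧ L ⊓ W ≤ H)]
        exact (Exists.choose_spec (⟨H, hH⟩ : ∃ H, H ∈ B.erase L ∧ L ⊓ W ≤ H)).1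
      · intro W hW W' hW' he
        rw [Finset.mem_coe] at hW hW'
        obtain ⟨H1, hH1⟩ := key L hL W hW
        obtain ⟨H2, hH2⟩ := key L hL W' hW'
        simp only at he
        rw [dif_pos ⟨H1, hH1⟩, dif_pos ⟨H2, hH2⟩] at he
        have hs1 := Exists.choose_spec (⟨H1, hH1⟩ : ∃ H, H ∈ B.erase L ∧ L ⊓ W ≤ H)
        have hs2 := Exists.choose_spec (⟨H2, hH2⟩ : ∃ H, H ∈ B.erase L ∧ L ⊓ W' ≤ H)
        rw [← he] at hs2
        set H := (⟨H1, hH1⟩ : ∃ H, H ∈ B.erase L ∧ L ⊓ W ≤ H).choose with hHdef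
        obtain ⟨hHer, hle1⟩ := hs1
        obtain ⟨_, hle2⟩ := hs2
        have hHL : H ≠ L := (Finset.mem_erase.1 hHer).1
        have hHA : H ∈ A := (Finset.mem_filter.1 (Finset.mem_erase.1 hHer).2).1
        have hWAp := (Finset.mem_sdiff.1 hW).1
        have hW'Ap := (Finset.mem_sdiff.1 hW').1
        have hLH1 : Module.finrank K ↥(L ⊓ H) = 1 := hinf1 L hLA H hHA (Ne.symm hHL)
        have e1 : L ⊓ W = L ⊓ H := Submodule.eq_of_le_of_finrank_le
          (le_inf inf_le_left hle1) (by rw [hLH1, hq1 L hL W hWAp])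
        have e2 : L ⊓ W' = L ⊓ H := Submodule.eq_of_le_of_finrank_le
          (le_inf inf_le_left hle2) (by rw [hLH1, hq1 L hL W' hW'Ap])
        exact hinj L hL W hWAp W' hW'Ap (e1.trans e2.symm)
    have herase : (B.erase L).card = k - 1 := by
      rw [Finset.card_erase_of_mem hL, hBcard]
    have hsd : (Ap \ good L).card = Ap.card - (good L).card :=
      Finset.card_sdiff_of_subset (hgoodsub L)
    have hgle : (good L).card ≤ Ap.card := Finset.card_le_card (hgoodsub L)
    omega
  -- collect the double points
  set T : Finset (Submodule K (Fin 3 → K)) :=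
    B.biUnion (fun L => (good L).image (fun W => L ⊓ W)) with hTdef
  -- every member of T is a double point
  have hTdouble : ∀ q ∈ T, IsDoublePoint K A q := by
    intro q hq
    obtain ⟨L, hL, hq⟩ := Finset.mem_biUnion.1 hq
    obtain ⟨W, hW, he⟩ := Finset.mem_image.1 hq
    exact he ▸ (Finset.mem_filter.1 hW).2
  -- the images are pairwise disjoint
  have hdisj : ∀ L ∈ B, ∀ L' ∈ B, L ≠ L' →
      Disjoint ((good L).image (fun W => L ⊓ W)) ((good L').image (fun W => L' ⊓ W)) := by
    intro L hL L' hL' hne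
    rw [Finset.disjoint_left]
    intro q hq hq'
    obtain ⟨W, hW, he⟩ := Finset.mem_image.1 hq
    obtain ⟨W', hW', he'⟩ := Finset.mem_image.1 hq'
    have hWAp : W ∈ Ap := hgoodsub L hW
    have hdbl : IsDoublePoint K A q := he ▸ (Finset.mem_filter.1 hW).2
    have hsub : {L, L', W} ⊆ A.filter (fun H => q ≤ H) := by
      intro x hx
      simp only [Finset.mem_insert, Finset.mem_singleton] at hx
      rcases hx with h | h | h
      · exact h ▸ Finset.mem_filter.2 ⟨(Finset.mem_filter.1 hL).1, he ▸ inf_le_left⟩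
      · exact h ▸ Finset.mem_filter.2 ⟨(Finset.mem_filter.1 hL').1, he' ▸ inf_le_left⟩
      · exact h ▸ Finset.mem_filter.2 ⟨(Finset.mem_filter.1 hWAp).1, he ▸ inf_le_right⟩
    have hWL : W ≠ L := (hLW L hL W hWAp).symm
    have hWL' : W ≠ L' := (hLW L' hL' W hWAp).symm
    have hcard3 : ({L, L', W} : Finset (Submodule K (Fin 3 → K))).card = 3 := by
      rw [Finset.card_insert_of_notMem (by simp [hne, hWL.symm]),
        Finset.card_pair hWL'.symm]
    have h3 : 3 ≤ (A.filter (fun H => q ≤ H)).card := by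
      calc 3 = ({L, L', W} : Finset (Submodule K (Fin 3 → K))).card := hcard3.symm
        _ ≤ _ := Finset.card_le_card hsub
    have := hdbl.2
    rw [aux_mult_eq] at this
    omega
  -- compute |T|
  have hTcard : k * (m - k + 1) ≤ T.card := by
    rw [hTdef, Finset.card_biUnion hdisj]
    have hterm : ∀ L ∈ B, m - k + 1 ≤ ((good L).image (fun W => L ⊓ W)).card := by
      intro L hL
      rw [Finset.card_image_of_injOn
        (fun W hW W' hW' => hinj L hL W (hgoodsub L hW) W' (hgoodsub L hW'))]
      exact hgoodcard L hL
    have hns := Finset.card_nsmul_le_sum B (fun L => ((good L).image (fun W => L ⊓ W)).card)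
      (m - k + 1) hterm
    rw [hBcard, smul_eq_mul] at hns
    exact hns
  -- the set of double points is finite
  have hfin : {q : Submodule K (Fin 3 → K) | IsDoublePoint K A q}.Finite := by
    apply Set.Finite.subset (Set.Finite.image2 (fun H L => H ⊓ L) A.finite_toSet A.finite_toSet)
    intro q hq
    obtain ⟨hqpt, hqm⟩ := hq
    have hqpt' : Module.finrank K ↥q = 1 := hqpt
    rw [aux_mult_eq] at hqm
    obtain ⟨H, L', hne, hfe⟩ := Finset.card_eq_two.1 hqm
    have hHf : H ∈ A.filter (fun H => q ≤ H) := by rw [hfe]; simp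
    have hLf : L' ∈ A.filter (fun H => q ≤ H) := by rw [hfe]; simp
    obtain ⟨hHA, hqH⟩ := Finset.mem_filter.1 hHf
    obtain ⟨hL'A, hqL'⟩ := Finset.mem_filter.1 hLf
    have h1 := hinf1 H hHA L' hL'A hne
    have : q = H ⊓ L' := Submodule.eq_of_le_of_finrank_le (le_inf hqH hqL')
      (by omega)
    exact ⟨H, hHA, L', hL'A, this.symm⟩
  -- conclude
  have hfinal : T.card ≤ n2 K A := by
    rw [← Set.ncard_coe_finset T]
    exact Set.ncard_le_ncard (fun q hq => hTdouble q (by exact_mod_cast hq)) hfin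
  omega
end

section
/- Let A be a supersolvable line arrangement in P² over a field K with a modular point p such that |A_p| = m, and let H ∈ A \ A_p. Then |A^H| = m, i.e., exactly m intersection points of A lie on H. -/
/-! Basic setup: the projective plane over a field `K` is modelled by linear
subspaces of `K³ = Fin 3 → K`: projective points are 1-dimensional subspaces
and projective lines are 2-dimensional subspaces; incidence is inclusion. -/

variable (K : Type*) [Field K]

/-- **Lemma.** Let `A` be a supersolvable line arrangement over a field `K` with
a modular point `p` with `|A_p| = m`, and let `H ∈ A \ A_p`.  Then `|A^H| = m`. -/
theorem pointsOn_eq_of_modular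
    (K : Type*) [Field K]
    (A : Finset (Submodule K (Fin 3 → K)))
    (hA : IsArrangement K A)
    (p : Submodule K (Fin 3 → K)) (m : ℕ)
    (hmod : IsModular K A p) (hm : mult K A p = m)
    (H : Submodule K (Fin 3 → K)) (hH : H ∈ A) (hHp : ¬ p ≤ H) :
    pointsOn K A H = m := by
  classical
  have hfin : Module.finrank K (Fin 3 → K) = 3 := Module.finrank_fin_fun K
  have hpoint : IsPoint K p := hmod.1.1
  -- key: intersection of two distinct lines is a point
  have key : ∀ L M : Submodule K (Fin 3 → K), IsLine K L → IsLine K M → L ≠ M →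
      IsPoint K (L ⊓ M) := by
    intro L M hL hM hne
    have h1 : Module.finrank K ↑(L ⊔ M) + Module.finrank K ↑(L ⊓ M)
        = Module.finrank K L + Module.finrank K M :=
      Submodule.finrank_sup_add_finrank_inf_eq L M
    have hsup : Module.finrank K ↑(L ⊔ M) ≤ 3 := by
      have := Submodule.finrank_le (L ⊔ M); rw [hfin] at this; exact this
    have hinf_le : Module.finrank K ↑(L ⊓ M) ≤ 2 := by
      have := Submodule.finrank_mono (inf_le_left : L ⊓ M ≤ L)
      rw [hL] at this; exact this
    rw [hL, hM] at h1
    have hge : 1 ≤ Module.finrank K ↑(L ⊓ M) := by omega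
    have hne2 : Module.finrank K ↑(L ⊓ M) ≠ 2 := by
      intro h2
      have e1 : L ⊓ M = L := Submodule.eq_of_le_of_finrank_eq inf_le_left (by rw [h2, hL])
      have e2 : L ⊓ M = M := Submodule.eq_of_le_of_finrank_eq inf_le_right (by rw [h2, hM])
      exact hne (e1 ▸ e2)
    unfold IsPoint; omega
  -- a line through two distinct points is determined
  have line_det : ∀ q L : Submodule K (Fin 3 → K), IsPoint K q → p ≠ q → IsLine K L →
      p ≤ L → q ≤ L → L = p ⊔ q := by
    intro q L hq hpq hL hpL hqL
    have hp1 : Module.finrank K p = 1 := hpoint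
    have hq1 : Module.finrank K q = 1 := hq
    have hL2 : Module.finrank K L = 2 := hL
    have hle : p ⊔ q ≤ L := sup_le hpL hqL
    have hinf : Module.finrank K ↑(p ⊓ q) = 0 := by
      have h2 : Module.finrank K ↑(p ⊓ q) ≤ 1 := by
        have := Submodule.finrank_mono (inf_le_left : p ⊓ q ≤ p)
        rw [hpoint] at this; exact this
      rcases Nat.lt_or_ge (Module.finrank K ↑(p ⊓ q)) 1 with h | h
      · omega
      · exfalso
        have e1 : p ⊓ q = p := Submodule.eq_of_le_of_finrank_eq inf_le_left (by omega)

        have hle' : p ≤ q := e1 ▸ inf_le_right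
        exact hpq (Submodule.eq_of_le_of_finrank_eq hle' (by omega))
    have h1 : Module.finrank K ↑(p ⊔ q) + Module.finrank K ↑(p ⊓ q)
        = Module.finrank K p + Module.finrank K q :=
      Submodule.finrank_sup_add_finrank_inf_eq p q
    rw [hp1, hq1, hinf] at h1
    exact (Submodule.eq_of_le_of_finrank_eq hle (by omega)).symm
  -- the relevant sets
  set S : Set (Submodule K (Fin 3 → K)) := {L ∈ (A : Set (Submodule K (Fin 3 → K))) | p ≤ L}
    with hS
  have himg : {q | IsIntersectionPoint K A q ∧ q ≤ H} = (fun L => L ⊓ H) '' S := by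
    ext q
    constructor
    · rintro ⟨⟨hq1, hq2⟩, hqH⟩
      have hmultset : 1 < {M ∈ (A : Set (Submodule K (Fin 3 → K))) | q ≤ M}.ncard := hq2
      obtain ⟨M, hM, hMne⟩ := Set.exists_ne_of_one_lt_ncard hmultset H
      obtain ⟨hMA, hqM⟩ := hM
      by_cases hpM : p ≤ M
      · refine ⟨M, ⟨hMA, hpM⟩, ?_⟩
        have hpt : IsPoint K (M ⊓ H) := key M H (hA M hMA) (hA H hH) hMne
        exact (Submodule.eq_of_le_of_finrank_eq (le_inf hqM hqH) (by rw [hq1, hpt])).symm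
      · obtain ⟨K', hK'A, hpK', hHK'⟩ := hmod.2 H hH M hMA hHp hpM (Ne.symm hMne)
        refine ⟨K', ⟨hK'A, hpK'⟩, ?_⟩
        have hK'H : K' ≠ H := fun h => hHp (h ▸ hpK')
        have hpt : IsPoint K (K' ⊓ H) := key K' H (hA K' hK'A) (hA H hH) hK'H
        have hqK' : q ≤ K' := le_trans (le_inf hqH hqM) hHK'
        exact (Submodule.eq_of_le_of_finrank_eq (le_inf hqK' hqH) (by rw [hq1, hpt])).symm
    · rintro ⟨L, ⟨hLA, hpL⟩, rfl⟩
      have hLH : L ≠ H := fun h => hHp (h ▸ hpL)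
      have hpt : IsPoint K (L ⊓ H) := key L H (hA L hLA) (hA H hH) hLH
      refine ⟨⟨hpt, ?_⟩, inf_le_right⟩
      have hsub : {L, H} ⊆ {M ∈ (A : Set (Submodule K (Fin 3 → K))) | L ⊓ H ≤ M} := by
        rintro x (rfl | rfl)
        · exact ⟨hLA, inf_le_left⟩
        · exact ⟨hH, inf_le_right⟩
      have hfin' : {M ∈ (A : Set (Submodule K (Fin 3 → K))) | L ⊓ H ≤ M}.Finite :=
        A.finite_toSet.subset (fun x hx => hx.1)
      calc 2 = ({L, H} : Set (Submodule K (Fin 3 → K))).ncard := (Set.ncard_pair hLH).symm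
        _ ≤ _ := Set.ncard_le_ncard hsub hfin'
  have hinj : Set.InjOn (fun L => L ⊓ H) S := by
    rintro L₁ ⟨hL₁A, hpL₁⟩ L₂ ⟨hL₂A, hpL₂⟩ heq
    simp only at heq
    have hL₁H : L₁ ≠ H := fun h => hHp (h ▸ hpL₁)
    have hL₂H : L₂ ≠ H := fun h => hHp (h ▸ hpL₂)
    have hpt : IsPoint K (L₁ ⊓ H) := key L₁ H (hA L₁ hL₁A) (hA H hH) hL₁H
    have hpq : p ≠ L₁ ⊓ H := by
      intro h
      exact hHp (h ▸ (inf_le_right : L₁ ⊓ H ≤ H))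
    have e1 := line_det (L₁ ⊓ H) L₁ hpt hpq (hA L₁ hL₁A) hpL₁ inf_le_left
    have e2 := line_det (L₁ ⊓ H) L₂ hpt hpq (hA L₂ hL₂A) hpL₂ (heq ▸ inf_le_left)
    rw [e1, e2]
  rw [pointsOn, himg, Set.ncard_image_of_injOn hinj, ← hm, mult]
end

section
/- Let A be a supersolvable line arrangement in P² over a field K with a modular point p, and write A \ A_p = {H₁, …, H_k} with the H_i distinct. Then n₂(A) ≥ Σ_{i=1}^k n₂(H_i); in particular, no double point of A lies on two distinct lines H_i, H_j ∈ A \ A_p. -/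
/-! Basic setup: the projective plane over a field `K` is modelled by linear
subspaces of `K³ = Fin 3 → K`: projective points are 1-dimensional subspaces
and projective lines are 2-dimensional subspaces; incidence is inclusion. -/

variable (K : Type*) [Field K]

section Aux

variable {K : Type*} [Field K]

lemma point_eq_inf {H L q : Submodule K (Fin 3 → K)} (hH : IsLine K H) (hL : IsLine K L)
    (hne : H ≠ L) (hq : IsPoint K q) (hqH : q ≤ H) (hqL : q ≤ L) : q = H ⊓ L := by
  have h3 : Module.finrank K (Fin 3 → K) = 3 := by simp
  have hHlt : H < H ⊔ L := by
    rcases lt_or_eq_of_le (le_sup_left : H ≤ H ⊔ L) with h | h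
    · exact h
    · exfalso
      apply hne
      have hLH : L ≤ H := h ▸ le_sup_right
      exact (Submodule.eq_of_le_of_finrank_eq hLH (hL.trans hH.symm)).symm
  have hsup : Module.finrank K ↥(H ⊔ L) = 3 := by
    have hle : Module.finrank K ↥(H ⊔ L) ≤ 3 := by
      have := Submodule.finrank_le (H ⊔ L)
      omega
    have hlt : Module.finrank K H < Module.finrank K ↥(H ⊔ L) :=
      Submodule.finrank_lt_finrank_of_lt hHlt
    rw [hH] at hlt
    omega
  have hinf : Module.finrank K ↥(H ⊓ L) = 1 := by
    have := Submodule.finrank_sup_add_finrank_inf_eq H L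
    rw [hsup, hH, hL] at this
    omega
  exact Submodule.eq_of_le_of_finrank_eq (le_inf hqH hqL) (hq.trans hinf.symm)

end Aux

/-- **Lemma.** Let `A` be a supersolvable line arrangement over a field `K` with
a modular point `p`.  Then `n₂(A) ≥ Σ_{H ∈ A \ A_p} n₂(H)`; in particular no
double point of `A` lies on two distinct lines of `A \ A_p`. -/
theorem n2_ge_sum_n2on_of_modular
    (K : Type*) [Field K]
    (A : Finset (Submodule K (Fin 3 → K)))
    (hA : IsArrangement K A)
    (p : Submodule K (Fin 3 → K)) (hmod : IsModular K A p) :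
    (∑ᶠ H ∈ {H ∈ (A : Set (Submodule K (Fin 3 → K))) | ¬ p ≤ H}, n2on K A H)
        ≤ n2 K A ∧
    ∀ H ∈ A, ∀ L ∈ A, ¬ p ≤ H → ¬ p ≤ L → H ≠ L →
      ∀ q : Submodule K (Fin 3 → K), IsDoublePoint K A q → ¬ (q ≤ H ∧ q ≤ L) := by
  classical
  have key : ∀ H ∈ A, ∀ L ∈ A, ¬ p ≤ H → ¬ p ≤ L → H ≠ L →
      ∀ q : Submodule K (Fin 3 → K), IsDoublePoint K A q → ¬ (q ≤ H ∧ q ≤ L) := by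
    rintro H hHA L hLA hpH hpL hne q hq ⟨hqH, hqL⟩
    obtain ⟨K', hK'A, hpK', hHL⟩ := hmod.2 H hHA L hLA hpH hpL hne
    have hqK' : q ≤ K' := le_trans (le_inf hqH hqL) hHL
    have hHK' : H ≠ K' := fun h => hpH (h ▸ hpK')
    have hLK' : L ≠ K' := fun h => hpL (h ▸ hpK')
    have hsub : ({H, L, K'} : Set (Submodule K (Fin 3 → K))) ⊆
        {M ∈ (A : Set (Submodule K (Fin 3 → K))) | q ≤ M} := by
      rintro M (rfl | rfl | rfl) <;> exact ⟨by assumption, by assumption⟩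
    have hfin : {M ∈ (A : Set (Submodule K (Fin 3 → K))) | q ≤ M}.Finite :=
      A.finite_toSet.subset (fun M hM => hM.1)
    have h3 : ({H, L, K'} : Set (Submodule K (Fin 3 → K))).ncard = 3 := by
      rw [Set.ncard_insert_of_notMem (by simp [hne, hHK']),
        Set.ncard_insert_of_notMem (by simp [hLK']), Set.ncard_singleton]
    have hle := Set.ncard_le_ncard hsub hfin
    rw [h3] at hle
    have := hq.2
    unfold mult at this
    omega
  refine ⟨?_, key⟩
  -- finiteness of the set of double points
  have hDfin : {q | IsDoublePoint K A q}.Finite := by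
    apply Set.Finite.subset (((A ×ˢ A).image fun HL => HL.1 ⊓ HL.2).finite_toSet)
    rintro q ⟨hqpt, hmult⟩
    obtain ⟨H, L, hne, hs⟩ := Set.ncard_eq_two.mp hmult
    have hH : H ∈ {M ∈ (A : Set (Submodule K (Fin 3 → K))) | q ≤ M} := by rw [hs]; simp
    have hL : L ∈ {M ∈ (A : Set (Submodule K (Fin 3 → K))) | q ≤ M} := by rw [hs]; simp
    have heq := point_eq_inf (hA H hH.1) (hA L hL.1) hne hqpt hH.2 hL.2
    simp only [Finset.coe_image, Set.mem_image, Finset.mem_coe, Finset.mem_product]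
    exact ⟨(H, L), ⟨hH.1, hL.1⟩, heq.symm⟩
  set T : Finset (Submodule K (Fin 3 → K)) := hDfin.toFinset with hT
  set S : Finset (Submodule K (Fin 3 → K)) := A.filter (fun H => ¬ p ≤ H) with hS
  have hSset : {H ∈ (A : Set (Submodule K (Fin 3 → K))) | ¬ p ≤ H} = ↑S := by
    ext H; simp [hS]
  rw [hSset, finsum_mem_coe_finset]
  have hn2on : ∀ H, n2on K A H = (T.filter (fun q => q ≤ H)).card := by
    intro H
    have : {q | IsDoublePoint K A q ∧ q ≤ H} = ↑(T.filter (fun q => q ≤ H)) := by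
      ext q; simp [hT, Set.Finite.mem_toFinset]
    rw [n2on, this, Set.ncard_coe_finset]
  have hn2 : n2 K A = T.card := by
    rw [n2, Set.ncard_eq_toFinset_card _ hDfin]
  calc ∑ H ∈ S, n2on K A H = ∑ H ∈ S, (T.filter (fun q => q ≤ H)).card := by
        exact Finset.sum_congr rfl fun H _ => hn2on H
    _ = (S.biUnion (fun H => T.filter (fun q => q ≤ H))).card := by
        rw [Finset.card_biUnion]
        intro H hH L hL hne
        simp only [hS, Finset.mem_coe, Finset.mem_filter] at hH hL
        rw [Function.onFun, Finset.disjoint_left]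
        intro q hqH hqL
        simp only [Finset.mem_filter, hT, Set.Finite.mem_toFinset, Set.mem_setOf_eq] at hqH hqL
        exact key H hH.1 L hL.1 hH.2 hL.2 hne q hqH.1 ⟨hqH.2, hqL.2⟩
    _ ≤ T.card := by
        apply Finset.card_le_card
        intro q hq
        simp only [Finset.mem_biUnion, Finset.mem_filter] at hq
        obtain ⟨H, _, hq, _⟩ := hq
        exact hq
    _ = n2 K A := hn2.symm
end
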